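/- In the parabolic model: let f : ℝ → ℝ be smooth with 1 − y²f(y) > 0 everywhere and define κ(y) = √(1 − y²f(y)) − 1. For c > 0, the closing condition integral ∫_{−c}^{c} c·(√(1−y²f(y)) − 1)/(y²·√(c²−y²)) dy vanishes for every c > 0 if and only if κ is odd (given κ continuous with κ(0)=0 and κ(y)/y² locally integrable). -/

import Mathlib

open MeasureTheory intervalIntegral Real

-- integrability of K(x-a)^{-1/2} + K'(b-x)^{-1/2} on a..b
lemma sumII (K K' a b : ℝ) :
    IntervalIntegrable (fun x => K * (x - a) ^ (-(1/2) : ℝ) + K' * (b - x) ^ (-(1/2) : ℝ))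
      volume a b := by
  have h1 : IntervalIntegrable (fun x => (x - a) ^ (-(1/2) : ℝ)) volume a b := by
    have := (intervalIntegrable_rpow' (a := 0) (b := b - a) (r := (-(1/2) : ℝ)) (by norm_num)).comp_sub_right a
    simpa using this
  have h2 : IntervalIntegrable (fun x => (b - x) ^ (-(1/2) : ℝ)) volume a b := by
    have := (intervalIntegrable_rpow' (a := b - a) (b := 0) (r := (-(1/2) : ℝ)) (by norm_num)).comp_sub_left b
    simpa using this
  exact (h1.const_mul K).add (h2.const_mul K')

-- comparison lemma
lemma boundII {f : ℝ → ℝ} {a b K K' : ℝ} (hab : a ≤ b)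
    (hm : AEStronglyMeasurable f (volume.restrict (Set.uIoc a b)))
    (hb : ∀ x ∈ Set.Ioo a b,
      |f x| ≤ K * (x - a) ^ (-(1/2) : ℝ) + K' * (b - x) ^ (-(1/2) : ℝ)) :
    IntervalIntegrable f volume a b := by
  apply (sumII K K' a b).mono_fun hm
  have hne : ∀ᵐ x ∂(volume.restrict (Set.uIoc a b)), x ≠ b :=
    ae_restrict_of_ae (by simp [ae_iff])
  filter_upwards [ae_restrict_mem measurableSet_uIoc, hne] with x hx hxb
  rw [Set.uIoc_of_le hab] at hx
  have hxo : x ∈ Set.Ioo a b := ⟨hx.1, lt_of_le_of_ne hx.2 hxb⟩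
  calc ‖f x‖ = |f x| := rfl
    _ ≤ K * (x - a) ^ (-(1/2) : ℝ) + K' * (b - x) ^ (-(1/2) : ℝ) := hb x hxo
    _ ≤ ‖K * (x - a) ^ (-(1/2) : ℝ) + K' * (b - x) ^ (-(1/2) : ℝ)‖ := le_abs_self _

lemma rpow_half_inv {x : ℝ} (hx : 0 < x) : x ^ (-(1/2) : ℝ) = (Real.sqrt x)⁻¹ := by
  rw [Real.rpow_neg hx.le, ← Real.sqrt_eq_rpow]

lemma divII {φ : ℝ → ℝ} (hφ : Continuous φ) {c : ℝ} (hc : 0 < c) :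
    IntervalIntegrable (fun y => φ y / Real.sqrt (c ^ 2 - y ^ 2)) volume 0 c := by
  obtain ⟨M, hM⟩ := (isCompact_Icc (a := (0:ℝ)) (b := c)).exists_bound_of_continuousOn
    hφ.continuousOn
  apply boundII hc.le (K := 0) (K' := M / Real.sqrt c)
  · exact ((hφ.measurable.div ((continuous_const.sub (continuous_pow 2)).sqrt).measurable)).aestronglyMeasurable
  · intro x hx
    have hxc : 0 < c - x := by linarith [hx.2]
    have hcx : 0 < c + x := by linarith [hx.1]
    have hsq : c ^ 2 - x ^ 2 = (c - x) * (c + x) := by ring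
    have hA : Real.sqrt (c ^ 2 - x ^ 2) = Real.sqrt (c - x) * Real.sqrt (c + x) := by
      rw [hsq, Real.sqrt_mul hxc.le]
    have hMx : |φ x| ≤ M := hM x ⟨hx.1.le, hx.2.le⟩
    have hM0 : 0 ≤ M := le_trans (abs_nonneg _) hMx
    rw [abs_div, hA]
    have h1 : Real.sqrt c ≤ Real.sqrt (c + x) := Real.sqrt_le_sqrt (by linarith [hx.1])
    have h2 : Real.sqrt (c - x) * Real.sqrt c ≤ Real.sqrt (c - x) * Real.sqrt (c + x) :=
      mul_le_mul_of_nonneg_left h1 (Real.sqrt_nonneg _)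
    have hpos : 0 < Real.sqrt (c - x) * Real.sqrt c :=
      mul_pos (Real.sqrt_pos.2 hxc) (Real.sqrt_pos.2 hc)
    have habs : |Real.sqrt (c - x) * Real.sqrt (c + x)| = Real.sqrt (c - x) * Real.sqrt (c + x) :=
      abs_of_nonneg (mul_nonneg (Real.sqrt_nonneg _) (Real.sqrt_nonneg _))
    rw [habs]
    have key : |φ x| / (Real.sqrt (c - x) * Real.sqrt (c + x)) ≤ M / (Real.sqrt (c - x) * Real.sqrt c) :=
      div_le_div₀ hM0 hMx hpos h2
    calc |φ x| / (Real.sqrt (c - x) * Real.sqrt (c + x)) ≤ M / (Real.sqrt (c - x) * Real.sqrt c) := key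
      _ = M / Real.sqrt c * (c - x) ^ (-(1/2) : ℝ) := by
          rw [rpow_half_inv hxc]; field_simp
      _ ≤ 0 * (x - 0) ^ (-(1/2) : ℝ) + M / Real.sqrt c * (c - x) ^ (-(1/2) : ℝ) := by
          simp

lemma div_est {c N L u : ℝ} (hc : 0 ≤ c) (hcN : c ≤ N) {D : ℝ}
    (hL : 0 < L) (hu : 0 < u) (hLD : L * Real.sqrt u ≤ D) :
    c / D ≤ N / L * u ^ (-(1/2) : ℝ) := by
  have hsu : 0 < Real.sqrt u := Real.sqrt_pos.2 hu
  have h1 : c / D ≤ N / (L * Real.sqrt u) :=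
    div_le_div₀ (le_trans hc hcN) hcN (mul_pos hL hsu) hLD
  calc c / D ≤ N / (L * Real.sqrt u) := h1
    _ = N / L * u ^ (-(1/2) : ℝ) := by rw [rpow_half_inv hu, div_mul_eq_div_div]; ring

lemma rpow_mh_nonneg {K u : ℝ} (hK : 0 ≤ K) (hu : 0 ≤ u) : 0 ≤ K * u ^ (-(1/2) : ℝ) :=
  mul_nonneg hK (Real.rpow_nonneg hu _)

lemma kerII {y R : ℝ} (h0 : 0 ≤ y) (hyR : y < R) :
    IntervalIntegrable
      (fun c => c / (Real.sqrt (c ^ 2 - y ^ 2) * Real.sqrt (R ^ 2 - c ^ 2))) volume y R := by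
  have hmeas : AEStronglyMeasurable
      (fun c => c / (Real.sqrt (c ^ 2 - y ^ 2) * Real.sqrt (R ^ 2 - c ^ 2)))
      (volume.restrict (Set.uIoc y R)) :=
    (measurable_id.div ((((continuous_pow 2).sub continuous_const).sqrt.mul
      ((continuous_const.sub (continuous_pow 2)).sqrt)).measurable)).aestronglyMeasurable
  have hR : 0 < R := lt_of_le_of_lt h0 hyR
  have key : ∀ c ∈ Set.Ioo y R,
      |c / (Real.sqrt (c ^ 2 - y ^ 2) * Real.sqrt (R ^ 2 - c ^ 2))|
      = c / (Real.sqrt (c ^ 2 - y ^ 2) * Real.sqrt (R ^ 2 - c ^ 2)) := by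
    intro c hc
    exact abs_of_nonneg (div_nonneg (le_trans h0 hc.1.le)
      (mul_nonneg (Real.sqrt_nonneg _) (Real.sqrt_nonneg _)))
  rcases eq_or_lt_of_le h0 with h0' | h0'
  · -- y = 0
    apply boundII hyR.le hmeas (K := 0) (K' := 1 / Real.sqrt R)
    intro c hc
    rw [key c hc]
    have hc0 : 0 < c := h0' ▸ hc.1
    have hRc : 0 < R - c := by linarith [hc.2]
    have hB2 : 0 < R ^ 2 - c ^ 2 := by nlinarith [hc.2]
    have hB : 0 < Real.sqrt (R ^ 2 - c ^ 2) := Real.sqrt_pos.2 hB2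
    have hA : Real.sqrt (c ^ 2 - y ^ 2) = c := by
      rw [← h0']; simpa using Real.sqrt_sq hc0.le
    have hsimp : c / (Real.sqrt (c ^ 2 - y ^ 2) * Real.sqrt (R ^ 2 - c ^ 2))
        = 1 / Real.sqrt (R ^ 2 - c ^ 2) := by
      rw [hA]; field_simp
    rw [hsimp]
    have hest : 1 / Real.sqrt (R ^ 2 - c ^ 2)
        ≤ 1 / Real.sqrt R * (R - c) ^ (-(1/2) : ℝ) := by
      apply div_est zero_le_one le_rfl (Real.sqrt_pos.2 hR) hRc
      calc Real.sqrt R * Real.sqrt (R - c) = Real.sqrt (R * (R - c)) :=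
            (Real.sqrt_mul hR.le _).symm
        _ ≤ Real.sqrt (R ^ 2 - c ^ 2) := Real.sqrt_le_sqrt (by nlinarith [hc.1, h0'])
    have h00 : (0:ℝ) ≤ 0 * (c - y) ^ (-(1/2) : ℝ) := by simp
    linarith [hest]
  · -- 0 < y
    set m := (y + R) / 2 with hm
    have hym : y < m := by rw [hm]; linarith
    have hmR : m < R := by rw [hm]; linarith
    have hL1 : 0 < Real.sqrt (2 * y) * Real.sqrt (R ^ 2 - m ^ 2) :=
      mul_pos (Real.sqrt_pos.2 (by linarith)) (Real.sqrt_pos.2 (by nlinarith))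
    have hL2 : 0 < Real.sqrt (m ^ 2 - y ^ 2) * Real.sqrt R :=
      mul_pos (Real.sqrt_pos.2 (by nlinarith)) (Real.sqrt_pos.2 hR)
    apply boundII hyR.le hmeas
      (K := R / (Real.sqrt (2 * y) * Real.sqrt (R ^ 2 - m ^ 2)))
      (K' := R / (Real.sqrt (m ^ 2 - y ^ 2) * Real.sqrt R))
    intro c hc
    rw [key c hc]
    have hc0 : 0 < c := lt_of_le_of_lt h0 hc.1
    have hcy : 0 < c - y := by linarith [hc.1]
    have hRc : 0 < R - c := by linarith [hc.2]
    have hA2 : 0 < c ^ 2 - y ^ 2 := by nlinarith [hc.1]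
    have hB2 : 0 < R ^ 2 - c ^ 2 := by nlinarith [hc.2]
    rcases le_or_gt c m with hcm | hcm
    · -- left regime
      have hest : c / (Real.sqrt (c ^ 2 - y ^ 2) * Real.sqrt (R ^ 2 - c ^ 2))
          ≤ R / (Real.sqrt (2 * y) * Real.sqrt (R ^ 2 - m ^ 2)) * (c - y) ^ (-(1/2) : ℝ) := by
        apply div_est hc0.le hc.2.le hL1 hcy
        have e1 : Real.sqrt (2 * y) * Real.sqrt (c - y) ≤ Real.sqrt (c ^ 2 - y ^ 2) := by
          rw [← Real.sqrt_mul (by linarith : (0:ℝ) ≤ 2 * y)]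
          exact Real.sqrt_le_sqrt (by nlinarith [hc.1])
        have e2 : Real.sqrt (R ^ 2 - m ^ 2) ≤ Real.sqrt (R ^ 2 - c ^ 2) :=
          Real.sqrt_le_sqrt (by nlinarith)
        calc Real.sqrt (2 * y) * Real.sqrt (R ^ 2 - m ^ 2) * Real.sqrt (c - y)
            = (Real.sqrt (2 * y) * Real.sqrt (c - y)) * Real.sqrt (R ^ 2 - m ^ 2) := by ring
          _ ≤ Real.sqrt (c ^ 2 - y ^ 2) * Real.sqrt (R ^ 2 - c ^ 2) :=
              mul_le_mul e1 e2 (Real.sqrt_nonneg _) (Real.sqrt_nonneg _)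
      have hnn : 0 ≤ R / (Real.sqrt (m ^ 2 - y ^ 2) * Real.sqrt R) * (R - c) ^ (-(1/2) : ℝ) :=
        rpow_mh_nonneg (div_nonneg hR.le hL2.le) hRc.le
      linarith
    · -- right regime
      have hest : c / (Real.sqrt (c ^ 2 - y ^ 2) * Real.sqrt (R ^ 2 - c ^ 2))
          ≤ R / (Real.sqrt (m ^ 2 - y ^ 2) * Real.sqrt R) * (R - c) ^ (-(1/2) : ℝ) := by
        apply div_est hc0.le hc.2.le hL2 hRc
        have e1 : Real.sqrt (m ^ 2 - y ^ 2) ≤ Real.sqrt (c ^ 2 - y ^ 2) :=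
          Real.sqrt_le_sqrt (by nlinarith)
        have e2 : Real.sqrt R * Real.sqrt (R - c) ≤ Real.sqrt (R ^ 2 - c ^ 2) := by
          rw [← Real.sqrt_mul hR.le]
          exact Real.sqrt_le_sqrt (by nlinarith [hc0])
        calc Real.sqrt (m ^ 2 - y ^ 2) * Real.sqrt R * Real.sqrt (R - c)
            = Real.sqrt (m ^ 2 - y ^ 2) * (Real.sqrt R * Real.sqrt (R - c)) := by ring
          _ ≤ Real.sqrt (c ^ 2 - y ^ 2) * Real.sqrt (R ^ 2 - c ^ 2) :=
              mul_le_mul e1 e2 (mul_nonneg (Real.sqrt_nonneg _) (Real.sqrt_nonneg _))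
                (Real.sqrt_nonneg _)
      have hnn : 0 ≤ R / (Real.sqrt (2 * y) * Real.sqrt (R ^ 2 - m ^ 2)) * (c - y) ^ (-(1/2) : ℝ) :=
        rpow_mh_nonneg (div_nonneg hR.le hL1.le) hcy.le
      linarith

lemma kerVal {y R : ℝ} (h0 : 0 ≤ y) (hyR : y < R) :
    ∫ c in y..R, c / (Real.sqrt (c ^ 2 - y ^ 2) * Real.sqrt (R ^ 2 - c ^ 2)) = π / 2 := by
  have hD : 0 < R ^ 2 - y ^ 2 := by nlinarith
  set F : ℝ → ℝ := fun c => Real.arcsin ((2 * c ^ 2 - y ^ 2 - R ^ 2) / (R ^ 2 - y ^ 2)) / 2 with hF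
  have hcont : ContinuousOn F (Set.Icc y R) := by
    apply Continuous.continuousOn
    rw [hF]
    exact (Real.continuous_arcsin.comp (by fun_prop)).div_const 2
  have hderiv : ∀ c ∈ Set.Ioo y R,
      HasDerivAt F (c / (Real.sqrt (c ^ 2 - y ^ 2) * Real.sqrt (R ^ 2 - c ^ 2))) c := by
    intro c hc
    have hc0 : 0 < c := lt_of_le_of_lt h0 hc.1
    have hA2 : 0 < c ^ 2 - y ^ 2 := by nlinarith [hc.1]
    have hB2 : 0 < R ^ 2 - c ^ 2 := by nlinarith [hc.2]
    set u := (2 * c ^ 2 - y ^ 2 - R ^ 2) / (R ^ 2 - y ^ 2) with hu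
    have hu1 : u < 1 := by
      rw [hu, div_lt_one hD]; nlinarith
    have hu2 : -1 < u := by
      rw [hu, lt_div_iff₀ hD]; nlinarith
    have hinner : HasDerivAt (fun c : ℝ => (2 * c ^ 2 - y ^ 2 - R ^ 2) / (R ^ 2 - y ^ 2))
        (4 * c / (R ^ 2 - y ^ 2)) c := by
      have : HasDerivAt (fun c : ℝ => 2 * c ^ 2 - y ^ 2 - R ^ 2) (4 * c) c := by
        have h := (((hasDerivAt_pow 2 c).const_mul 2).sub_const (y ^ 2)).sub_const (R ^ 2)
        refine h.congr_deriv (Eq.symm ?_)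
        push_cast
        ring
      simpa using this.div_const (R ^ 2 - y ^ 2)
    have harc := (Real.hasDerivAt_arcsin hu2.ne' hu1.ne).comp c hinner
    have hfinal := harc.div_const 2
    refine hfinal.congr_deriv (Eq.symm ?_)
    -- show c / (A * B) = (1 / √(1 - u^2) * (4c/(R²−y²))) / 2
    have h1u : 1 - u ^ 2 = 4 * (c ^ 2 - y ^ 2) * (R ^ 2 - c ^ 2) / (R ^ 2 - y ^ 2) ^ 2 := by
      rw [hu]; field_simp; ring
    have hsq : Real.sqrt (1 - u ^ 2)
        = 2 * Real.sqrt (c ^ 2 - y ^ 2) * Real.sqrt (R ^ 2 - c ^ 2) / (R ^ 2 - y ^ 2) := by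
      rw [h1u]
      rw [show 4 * (c ^ 2 - y ^ 2) * (R ^ 2 - c ^ 2) / (R ^ 2 - y ^ 2) ^ 2
        = (2 * Real.sqrt (c ^ 2 - y ^ 2) * Real.sqrt (R ^ 2 - c ^ 2) / (R ^ 2 - y ^ 2)) ^ 2 by
          rw [div_pow, mul_pow, mul_pow, Real.sq_sqrt hA2.le, Real.sq_sqrt hB2.le]; ring]
      exact Real.sqrt_sq (by positivity)
    rw [hsq]
    have hApos : 0 < Real.sqrt (c ^ 2 - y ^ 2) := Real.sqrt_pos.2 hA2
    have hBpos : 0 < Real.sqrt (R ^ 2 - c ^ 2) := Real.sqrt_pos.2 hB2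
    field_simp
    ring
  have := intervalIntegral.integral_eq_sub_of_hasDeriv_right_of_le hyR.le hcont
    (fun c hc => (hderiv c hc).hasDerivWithinAt) (kerII h0 hyR)
  rw [this, hF]
  have e1 : (2 * R ^ 2 - y ^ 2 - R ^ 2) / (R ^ 2 - y ^ 2) = 1 := by
    rw [div_eq_one_iff_eq hD.ne']; ring
  have e2 : (2 * y ^ 2 - y ^ 2 - R ^ 2) / (R ^ 2 - y ^ 2) = -1 := by
    rw [div_eq_iff hD.ne']; ring
  simp only [e1, e2, Real.arcsin_one, Real.arcsin_neg_one]
  ring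

lemma oneII {c : ℝ} (hc : 0 < c) :
    IntervalIntegrable (fun y => 1 / Real.sqrt (c ^ 2 - y ^ 2)) volume 0 c :=
  divII continuous_const hc

lemma oneVal {c : ℝ} (hc : 0 < c) :
    ∫ y in (0:ℝ)..c, 1 / Real.sqrt (c ^ 2 - y ^ 2) = π / 2 := by
  rw [← kerVal le_rfl hc]
  apply intervalIntegral.integral_congr_ae
  filter_upwards with x hx
  rw [Set.uIoc_of_le hc.le] at hx
  have hx0 : 0 < x := hx.1
  have h0 : Real.sqrt (x ^ 2 - 0 ^ 2) = x := by
    rw [show x ^ 2 - 0 ^ 2 = x ^ 2 by ring]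
    exact Real.sqrt_sq hx0.le
  rw [h0]
  rcases eq_or_ne (Real.sqrt (c ^ 2 - x ^ 2)) 0 with hB | hB
  · rw [hB]; simp
  · field_simp

lemma fubini_step (ψ : ℝ → ℝ) (hψ : Continuous ψ)
    (hzero : ∀ c > (0:ℝ), ∫ y in (0:ℝ)..c, ψ y / Real.sqrt (c ^ 2 - y ^ 2) = 0)
    {R : ℝ} (hR : 0 < R) : ∫ y in (0:ℝ)..R, ψ y = 0 := by
  set μ : Measure ℝ := volume.restrict (Set.Ioc 0 R) with hμ
  set g : ℝ → ℝ → ℝ := fun c y =>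
    ψ y * (c / (Real.sqrt (c ^ 2 - y ^ 2) * Real.sqrt (R ^ 2 - c ^ 2))) with hg
  obtain ⟨M, hM⟩ := (isCompact_Icc (a := (0:ℝ)) (b := R)).exists_bound_of_continuousOn
    hψ.continuousOn
  have hM0 : 0 ≤ M := le_trans (norm_nonneg _) (hM 0 ⟨le_rfl, hR.le⟩)
  -- vanishing of g outside the triangle
  have zer1 : ∀ c y : ℝ, 0 ≤ c → c ≤ y → g c y = 0 := by
    intro c y hc hcy
    have : Real.sqrt (c ^ 2 - y ^ 2) = 0 := by
      rw [Real.sqrt_eq_zero']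
      nlinarith
    simp [hg, this]
  -- measurability
  have meas : Measurable (Function.uncurry g) := by
    apply ((hψ.comp continuous_snd).measurable).mul
    apply measurable_fst.div
    exact ((Real.continuous_sqrt.comp
        (((continuous_pow 2).comp continuous_fst).sub ((continuous_pow 2).comp continuous_snd))).mul
      (Real.continuous_sqrt.comp
        (continuous_const.sub ((continuous_pow 2).comp continuous_fst)))).measurable
  -- rewriting of slices
  have grw : ∀ c : ℝ, (fun y => g c y)
      = fun y => (c / Real.sqrt (R ^ 2 - c ^ 2)) * (ψ y / Real.sqrt (c ^ 2 - y ^ 2)) := by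
    intro c
    funext y
    rw [hg]
    simp only []
    rw [div_mul_div_comm, mul_div_assoc', mul_comm (ψ y) c,
      mul_comm (Real.sqrt (c ^ 2 - y ^ 2)) (Real.sqrt (R ^ 2 - c ^ 2))]
  -- slice integrability in y
  have sliceInt : ∀ c ∈ Set.Ioo (0:ℝ) R, IntegrableOn (fun y => g c y) (Set.Ioc 0 R) volume := by
    intro c hc
    rw [← Set.Ioc_union_Ioc_eq_Ioc hc.1.le hc.2.le]
    apply IntegrableOn.union
    · rw [grw c]
      exact (((intervalIntegrable_iff_integrableOn_Ioc_of_le hc.1.le).1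
        (divII hψ hc.1))).const_mul _
    · exact (integrableOn_congr_fun
        (fun y hy => zer1 c y hc.1.le hy.1.le) measurableSet_Ioc).2 (integrableOn_zero)
  -- slice vanishing in y
  have sliceVal : ∀ c ∈ Set.Ioo (0:ℝ) R, ∫ y in Set.Ioc (0:ℝ) R, g c y = 0 := by
    intro c hc
    rw [← Set.Ioc_union_Ioc_eq_Ioc hc.1.le hc.2.le,
      setIntegral_union (Set.Ioc_disjoint_Ioc_of_le le_rfl) measurableSet_Ioc
        (((sliceInt c hc).mono_set (by rw [← Set.Ioc_union_Ioc_eq_Ioc hc.1.le hc.2.le]; exact Set.subset_union_left)))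
        (((sliceInt c hc).mono_set (by rw [← Set.Ioc_union_Ioc_eq_Ioc hc.1.le hc.2.le]; exact Set.subset_union_right)))]
    have p2 : ∫ y in Set.Ioc c R, g c y = 0 :=
      setIntegral_eq_zero_of_forall_eq_zero fun y hy => zer1 c y hc.1.le hy.1.le
    have p1 : ∫ y in Set.Ioc (0:ℝ) c, g c y = 0 := by
      rw [grw c, MeasureTheory.integral_const_mul, ← intervalIntegral.integral_of_le hc.1.le,
        hzero c hc.1, mul_zero]
    rw [p1, p2, add_zero]
  -- slice value in c
  have sliceC : ∀ y ∈ Set.Ioo (0:ℝ) R, ∫ c in Set.Ioc (0:ℝ) R, g c y = ψ y * (π / 2) := by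
    intro y hy
    have i2 : IntegrableOn (fun c => g c y) (Set.Ioc y R) volume := by
      have := ((intervalIntegrable_iff_integrableOn_Ioc_of_le hy.2.le).1
        (kerII hy.1.le hy.2)).const_mul (ψ y)
      exact this
    have i1 : IntegrableOn (fun c => g c y) (Set.Ioc (0:ℝ) y) volume :=
      (integrableOn_congr_fun (fun c hc => zer1 c y hc.1.le hc.2) measurableSet_Ioc).2
        integrableOn_zero
    rw [← Set.Ioc_union_Ioc_eq_Ioc hy.1.le hy.2.le,
      setIntegral_union (Set.Ioc_disjoint_Ioc_of_le le_rfl) measurableSet_Ioc i1 i2]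
    have p1 : ∫ c in Set.Ioc (0:ℝ) y, g c y = 0 :=
      setIntegral_eq_zero_of_forall_eq_zero fun c hc => zer1 c y hc.1.le hc.2
    have p2 : ∫ c in Set.Ioc y R, g c y = ψ y * (π / 2) := by
      rw [hg]
      simp only []
      rw [MeasureTheory.integral_const_mul, ← intervalIntegral.integral_of_le hy.2.le, kerVal hy.1.le hy.2]
    rw [p1, p2, zero_add]
  -- a.e. membership in Ioo
  have haeIoo : ∀ᵐ x ∂μ, x ∈ Set.Ioo (0:ℝ) R := by
    have h1 : ∀ᵐ x ∂μ, x ∈ Set.Ioc (0:ℝ) R := ae_restrict_mem measurableSet_Ioc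
    have h2 : ∀ᵐ x ∂μ, x ≠ R := ae_restrict_of_ae (by simp [ae_iff])
    filter_upwards [h1, h2] with x hx hxR
    exact ⟨hx.1, lt_of_le_of_ne hx.2 hxR⟩
  -- product integrability
  have prodInt : Integrable (Function.uncurry g) (μ.prod μ) := by
    rw [integrable_prod_iff meas.aestronglyMeasurable]
    constructor
    · filter_upwards [haeIoo] with c hc
      exact sliceInt c hc
    · -- dominated by G
      set G : ℝ → ℝ := fun c => M * (π / 2) * (c / Real.sqrt (R ^ 2 - c ^ 2)) with hG
      have hGII : IntervalIntegrable G volume 0 R := by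
        apply boundII hR.le (K := 0) (K' := M * (π / 2) * (R / Real.sqrt R))
        · exact (measurable_const.mul (measurable_id.div
            (Real.continuous_sqrt.comp
              (continuous_const.sub (continuous_pow 2))).measurable)).aestronglyMeasurable
        · intro c hc
          have hc0 : 0 < c := hc.1
          have hRc : 0 < R - c := by linarith [hc.2]
          have habs : |G c| = M * (π / 2) * (c / Real.sqrt (R ^ 2 - c ^ 2)) := by
            rw [hG]
            exact abs_of_nonneg (mul_nonneg (by positivity)
              (div_nonneg hc0.le (Real.sqrt_nonneg _)))
          rw [habs]
          have hdiv : c / Real.sqrt (R ^ 2 - c ^ 2) ≤ R / Real.sqrt R * (R - c) ^ (-(1/2) : ℝ) := by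
            apply div_est hc0.le hc.2.le (Real.sqrt_pos.2 hR) hRc
            rw [← Real.sqrt_mul hR.le]
            exact Real.sqrt_le_sqrt (by nlinarith)
          have := mul_le_mul_of_nonneg_left hdiv (by positivity : (0:ℝ) ≤ M * (π / 2))
          calc M * (π / 2) * (c / Real.sqrt (R ^ 2 - c ^ 2))
              ≤ M * (π / 2) * (R / Real.sqrt R * (R - c) ^ (-(1/2) : ℝ)) := this
            _ = 0 * (c - 0) ^ (-(1/2) : ℝ)
                + M * (π / 2) * (R / Real.sqrt R) * (R - c) ^ (-(1/2) : ℝ) := by ring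
      have hGint : Integrable G μ :=
        (intervalIntegrable_iff_integrableOn_Ioc_of_le hR.le).1 hGII
      apply Integrable.mono hGint
      · exact meas.aestronglyMeasurable.norm.integral_prod_right'
      · filter_upwards [haeIoo] with c hc
        have hc0 : 0 < c := hc.1
        have hB2 : 0 < R ^ 2 - c ^ 2 := by nlinarith [hc.2]
        have sub1 : Set.Ioc (0:ℝ) c ⊆ Set.Ioc 0 R := Set.Ioc_subset_Ioc le_rfl hc.2.le
        have sub2 : Set.Ioc c R ⊆ Set.Ioc 0 R := Set.Ioc_subset_Ioc hc.1.le le_rfl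
        have hin : Function.uncurry g ∘ (fun y => (c, y)) = fun y => g c y := rfl
        rw [Real.norm_of_nonneg (integral_nonneg fun y => norm_nonneg _)]
        have hsplit : (∫ y, ‖Function.uncurry g (c, y)‖ ∂μ)
            = ∫ y in Set.Ioc (0:ℝ) c, ‖g c y‖ := by
          rw [hμ]
          rw [show (fun y => ‖Function.uncurry g (c, y)‖) = fun y => ‖g c y‖ from rfl]
          rw [← Set.Ioc_union_Ioc_eq_Ioc hc.1.le hc.2.le,
            setIntegral_union (Set.Ioc_disjoint_Ioc_of_le le_rfl) measurableSet_Ioc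
              (((sliceInt c hc).mono_set sub1).norm) (((sliceInt c hc).mono_set sub2).norm)]
          have p2 : ∫ y in Set.Ioc c R, ‖g c y‖ = 0 :=
            setIntegral_eq_zero_of_forall_eq_zero
              (fun y hy => by rw [zer1 c y hc.1.le hy.1.le, norm_zero])
          rw [p2, add_zero]
        rw [hsplit]
        have hRHSint : IntegrableOn
            (fun y => M * (c / Real.sqrt (R ^ 2 - c ^ 2)) * (1 / Real.sqrt (c ^ 2 - y ^ 2)))
            (Set.Ioc (0:ℝ) c) volume :=
          ((intervalIntegrable_iff_integrableOn_Ioc_of_le hc.1.le).1 (oneII hc.1)).const_mul _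
        have hle : ∫ y in Set.Ioc (0:ℝ) c, ‖g c y‖
            ≤ ∫ y in Set.Ioc (0:ℝ) c,
                M * (c / Real.sqrt (R ^ 2 - c ^ 2)) * (1 / Real.sqrt (c ^ 2 - y ^ 2)) := by
          apply setIntegral_mono_on (((sliceInt c hc).mono_set sub1).norm) hRHSint
            measurableSet_Ioc
          intro y hy
          have hfrac : 0 ≤ c / (Real.sqrt (c ^ 2 - y ^ 2) * Real.sqrt (R ^ 2 - c ^ 2)) :=
            div_nonneg hc0.le (mul_nonneg (Real.sqrt_nonneg _) (Real.sqrt_nonneg _))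
          have h1 : ‖g c y‖
              = |ψ y| * (c / (Real.sqrt (c ^ 2 - y ^ 2) * Real.sqrt (R ^ 2 - c ^ 2))) := by
            rw [hg]
            simp only []
            rw [Real.norm_eq_abs, abs_mul, abs_of_nonneg hfrac]
          rw [h1]
          have h2 : |ψ y| ≤ M := hM y ⟨hy.1.le, hy.2.trans hc.2.le⟩
          calc |ψ y| * (c / (Real.sqrt (c ^ 2 - y ^ 2) * Real.sqrt (R ^ 2 - c ^ 2)))
              ≤ M * (c / (Real.sqrt (c ^ 2 - y ^ 2) * Real.sqrt (R ^ 2 - c ^ 2))) :=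
                mul_le_mul_of_nonneg_right h2 hfrac
            _ = M * (c / Real.sqrt (R ^ 2 - c ^ 2)) * (1 / Real.sqrt (c ^ 2 - y ^ 2)) := by
                field_simp
        have hval : ∫ y in Set.Ioc (0:ℝ) c,
            M * (c / Real.sqrt (R ^ 2 - c ^ 2)) * (1 / Real.sqrt (c ^ 2 - y ^ 2))
            = M * (c / Real.sqrt (R ^ 2 - c ^ 2)) * (π / 2) := by
          rw [MeasureTheory.integral_const_mul, ← intervalIntegral.integral_of_le hc.1.le, oneVal hc.1]
        have hfin : M * (c / Real.sqrt (R ^ 2 - c ^ 2)) * (π / 2) = G c := by rw [hG]; ring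
        calc (∫ y in Set.Ioc (0:ℝ) c, ‖g c y‖)
            ≤ M * (c / Real.sqrt (R ^ 2 - c ^ 2)) * (π / 2) := by rw [← hval]; exact hle
          _ = G c := hfin
          _ ≤ ‖G c‖ := le_abs_self _
  -- swap
  have swap := MeasureTheory.integral_integral_swap (μ := μ) (ν := μ) (f := g) prodInt
  have lhs : (∫ c, (∫ y, g c y ∂μ) ∂μ) = 0 := by
    apply integral_eq_zero_of_ae
    filter_upwards [haeIoo] with c hc
    exact sliceVal c hc
  have rhs : (∫ y, (∫ c, g c y ∂μ) ∂μ) = (∫ y in Set.Ioc (0:ℝ) R, ψ y) * (π / 2) := by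
    have e1 : (∫ y, (∫ c, g c y ∂μ) ∂μ) = ∫ y, ψ y * (π / 2) ∂μ := by
      apply MeasureTheory.integral_congr_ae
      filter_upwards [haeIoo] with y hy
      exact sliceC y hy
    rw [e1, hμ, MeasureTheory.integral_mul_const]
  have hfinal : (∫ y in Set.Ioc (0:ℝ) R, ψ y) * (π / 2) = 0 := by
    rw [← rhs, ← swap, lhs]
  have hπ : (π / 2 : ℝ) ≠ 0 := by positivity
  rw [intervalIntegral.integral_of_le hR.le]
  rcases mul_eq_zero.1 hfinal with h | h
  · exact h
  · exact absurd h hπ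

/-- Parabolic closing criterion: with `κ(y) = √(1−y²f(y)) − 1`, the closing
integrals all vanish iff `κ` is odd. -/
theorem stmt_11 (f : ℝ → ℝ) (hf : Continuous f)
    (hpos : ∀ y, 1 - y ^ 2 * f y > 0)
    (κ : ℝ → ℝ) (hκ : ∀ y, κ y = Real.sqrt (1 - y ^ 2 * f y) - 1)
    (hint : ∀ c > (0:ℝ), IntervalIntegrable
      (fun y => c * κ y / (y ^ 2 * Real.sqrt (c ^ 2 - y ^ 2))) volume (-c) c) :
    (∀ c > (0:ℝ),
        (∫ y in (-c)..c, c * κ y / (y ^ 2 * Real.sqrt (c ^ 2 - y ^ 2))) = 0)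
      ↔ (∀ y, κ (-y) = -κ y) := by
  set φ : ℝ → ℝ := fun y => -f y / (1 + Real.sqrt (1 - y ^ 2 * f y)) with hφdef
  have hden : ∀ y, 0 < 1 + Real.sqrt (1 - y ^ 2 * f y) := fun y => by positivity
  have hκφ : ∀ y, κ y = y ^ 2 * φ y := by
    intro y
    have hsq : Real.sqrt (1 - y ^ 2 * f y) * Real.sqrt (1 - y ^ 2 * f y)
        = 1 - y ^ 2 * f y := Real.mul_self_sqrt (hpos y).le
    rw [hκ, hφdef]
    simp only []
    rw [mul_div_assoc']
    rw [eq_div_iff (hden y).ne']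
    ring_nf
    nlinarith [hsq]
  have hφc : Continuous φ := by
    apply Continuous.div
    · exact hf.neg
    · exact continuous_const.add (Real.continuous_sqrt.comp
        (continuous_const.sub ((continuous_pow 2).mul hf)))
    · exact fun y => (hden y).ne'
  constructor
  · -- hard direction
    intro hI
    set ψ : ℝ → ℝ := fun y => φ y + φ (-y) with hψdef
    have hψc : Continuous ψ := hφc.add (hφc.comp continuous_neg)
    -- derive the transformed closing condition
    have hzero : ∀ c > (0:ℝ), ∫ y in (0:ℝ)..c, ψ y / Real.sqrt (c ^ 2 - y ^ 2) = 0 := by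
      intro c hc
      set F : ℝ → ℝ := fun y => c * (φ y / Real.sqrt (c ^ 2 - y ^ 2)) with hFdef
      -- step 1 : the original integral equals the integral of F
      have step1 : ∫ y in (-c)..c, F y = 0 := by
        rw [← hI c hc]
        apply intervalIntegral.integral_congr_ae
        have hne : ∀ᵐ x : ℝ ∂volume, x ≠ 0 := by simp [ae_iff]
        filter_upwards [hne] with y hy _
        rw [hFdef]
        simp only []
        rw [hκφ y]
        rcases eq_or_ne (Real.sqrt (c ^ 2 - y ^ 2)) 0 with hA | hA
        · rw [hA]; simp
        · have hy2 : (y : ℝ) ^ 2 ≠ 0 := pow_ne_zero 2 hy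
          field_simp
      -- integrabilities
      have II2 : IntervalIntegrable F volume 0 c := by
        rw [hFdef]
        exact (divII hφc hc).const_mul c
      have hFneg : (fun x => F (-x)) = fun x => c * (φ (-x) / Real.sqrt (c ^ 2 - x ^ 2)) := by
        funext x
        rw [hFdef]
        simp only [neg_sq]
      have II2' : IntervalIntegrable (fun x => F (-x)) volume 0 c := by
        rw [hFneg]
        exact (divII (hφc.comp continuous_neg) hc).const_mul c
      have II1 : IntervalIntegrable F volume (-c) 0 := by
        rw [IntervalIntegrable.iff_comp_neg]
        simp only [neg_neg, neg_zero]
        exact II2'.symm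
      -- reflection
      have hrefl : ∫ y in (-c)..(0:ℝ), F y
          = ∫ x in (0:ℝ)..c, c * (φ (-x) / Real.sqrt (c ^ 2 - x ^ 2)) := by
        rw [← hFneg, intervalIntegral.integral_comp_neg, neg_zero]
      have hadd := intervalIntegral.integral_add_adjacent_intervals II1 II2
      rw [step1, hrefl] at hadd
      have hsum : (∫ x in (0:ℝ)..c, c * (φ (-x) / Real.sqrt (c ^ 2 - x ^ 2)))
          + ∫ x in (0:ℝ)..c, F x
          = ∫ x in (0:ℝ)..c, c * (ψ x / Real.sqrt (c ^ 2 - x ^ 2)) := by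
        rw [← intervalIntegral.integral_add (by rw [← hFneg]; exact II2') II2]
        apply intervalIntegral.integral_congr
        intro x _
        rw [hFdef, hψdef]
        simp only []
        ring
      rw [hsum] at hadd
      rw [intervalIntegral.integral_const_mul] at hadd
      rcases mul_eq_zero.1 hadd with h | h
      · exact absurd h hc.ne'
      · exact h
    -- all averages vanish
    have hall : ∀ R > (0:ℝ), ∫ y in (0:ℝ)..R, ψ y = 0 := fun R hR =>
      fubini_step ψ hψc hzero hR
    -- ψ vanishes on positives
    have hψ0 : ∀ t > (0:ℝ), ψ t = 0 := by
      intro t ht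
      have hd1 : deriv (fun u => ∫ y in (0:ℝ)..u, ψ y) t = ψ t :=
        Continuous.deriv_integral ψ hψc 0 t
      have heq : (fun u => ∫ y in (0:ℝ)..u, ψ y) =ᶠ[nhds t] (fun _ => (0:ℝ)) := by
        filter_upwards [isOpen_Ioo.mem_nhds (show t ∈ Set.Ioo 0 (t+1) from ⟨ht, lt_add_one t⟩)]
          with u hu
        exact hall u hu.1
      have hd2 := heq.deriv_eq
      rw [hd1] at hd2
      simpa using hd2
    -- conclude oddness
    intro y
    rcases lt_trichotomy y 0 with hy | hy | hy
    · have h := hψ0 (-y) (by linarith)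
      rw [hψdef] at h
      simp only [neg_neg] at h
      rw [hκφ (-y), hκφ y, neg_sq]
      linear_combination (y ^ 2) * h
    · subst hy
      simp [hκ]
    · have h := hψ0 y hy
      rw [hψdef] at h
      simp only [] at h
      rw [hκφ (-y), hκφ y, neg_sq]
      linear_combination (y ^ 2) * h
  · -- easy direction
    intro hodd c hc
    set F : ℝ → ℝ := fun y => c * κ y / (y ^ 2 * Real.sqrt (c ^ 2 - y ^ 2)) with hFdef
    have hsub1 : Set.uIcc (-c) (0:ℝ) ⊆ Set.uIcc (-c) c := by
      rw [Set.uIcc_of_le (by linarith : -c ≤ (0:ℝ)), Set.uIcc_of_le (by linarith : -c ≤ c)]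
      exact Set.Icc_subset_Icc le_rfl hc.le
    have hsub2 : Set.uIcc (0:ℝ) c ⊆ Set.uIcc (-c) c := by
      rw [Set.uIcc_of_le hc.le, Set.uIcc_of_le (by linarith : -c ≤ c)]
      exact Set.Icc_subset_Icc (by linarith) le_rfl
    have II1 : IntervalIntegrable F volume (-c) 0 := (hint c hc).mono_set hsub1
    have II2 : IntervalIntegrable F volume 0 c := (hint c hc).mono_set hsub2
    have hFneg : (fun x => F (-x)) = fun x => -F x := by
      funext x
      rw [hFdef]
      simp only [neg_sq, hodd x, mul_neg, neg_div]
    have hrefl : ∫ y in (-c)..(0:ℝ), F y = -∫ x in (0:ℝ)..c, F x := by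
      have h1 := intervalIntegral.integral_comp_neg (a := (0:ℝ)) (b := c) (f := F)
      rw [hFneg, neg_zero, intervalIntegral.integral_neg] at h1
      linarith [h1]
    have hadd := intervalIntegral.integral_add_adjacent_intervals II1 II2
    rw [hrefl] at hadd
    rw [← hadd]
    ring
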